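/- Let f : ℝⁿ → ℝ be convex and Lipschitz with constant L > 0 (|f(y) − f(z)| ≤ L‖y − z‖ for all y, z ∈ ℝⁿ), let x ∈ ℝⁿ and ε ≥ 0. Then convexHull ℝ (⋃_{y ∈ closedBall(x, ε/(2L))} ∂f(y)) ⊆ ∂_ε f(x). -/

import Mathlib

open scoped RealInnerProductSpace

/-- The ε-subdifferential of `g` at `x`. -/
def epsSubdiff {n : ℕ} (g : EuclideanSpace ℝ (Fin n) → ℝ) (ε : ℝ)
    (x : EuclideanSpace ℝ (Fin n)) : Set (EuclideanSpace ℝ (Fin n)) :=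
  {ξ | ∀ y, g y ≥ g x + ⟪ξ, y - x⟫ - ε}

/-- The subdifferential of `g` at `x`. -/
def subdiff {n : ℕ} (g : EuclideanSpace ℝ (Fin n) → ℝ)
    (x : EuclideanSpace ℝ (Fin n)) : Set (EuclideanSpace ℝ (Fin n)) :=
  {ξ | ∀ y, g y ≥ g x + ⟪ξ, y - x⟫}

/-- The t-spherical subdifferential of `g` at `x`. -/
def sphSubdiff {n : ℕ} (g : EuclideanSpace ℝ (Fin n) → ℝ) (t : ℝ)
    (x : EuclideanSpace ℝ (Fin n)) : Set (EuclideanSpace ℝ (Fin n)) :=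
  convexHull ℝ {ξ | ∃ d : EuclideanSpace ℝ (Fin n), ‖d‖ = 1 ∧ ξ ∈ subdiff g (x + t • d)}

lemma epsSubdiff_convex {n : ℕ} (g : EuclideanSpace ℝ (Fin n) → ℝ) (ε : ℝ)
    (x : EuclideanSpace ℝ (Fin n)) : Convex ℝ (epsSubdiff g ε x) := by
  intro ξ hξ η hη a b ha hb hab
  intro y
  have h1 := hξ y
  have h2 := hη y
  have : ⟪a • ξ + b • η, y - x⟫ = a * ⟪ξ, y - x⟫ + b * ⟪η, y - x⟫ := by
    rw [inner_add_left, real_inner_smul_left, real_inner_smul_left]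
  rw [ge_iff_le] at h1 h2 ⊢
  rw [this]
  have e1 := mul_le_mul_of_nonneg_left h1 ha
  have e2 := mul_le_mul_of_nonneg_left h2 hb
  have hb1 : b = 1 - a := by linarith
  subst hb1
  nlinarith [e1, e2]

theorem goldstein_eps_subset_eps_subdiff {n : ℕ}
    (f : EuclideanSpace ℝ (Fin n) → ℝ) (hf : ConvexOn ℝ Set.univ f)
    (L : ℝ) (hL : 0 < L) (hLip : ∀ y z, |f y - f z| ≤ L * ‖y - z‖)
    (x : EuclideanSpace ℝ (Fin n)) (ε : ℝ) (hε : 0 ≤ ε) :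
    convexHull ℝ (⋃ y ∈ Metric.closedBall x (ε / (2 * L)), subdiff f y) ⊆
      epsSubdiff f ε x := by
  apply convexHull_min _ (epsSubdiff_convex f ε x)
  rintro ξ hξ
  simp only [Set.mem_iUnion] at hξ
  obtain ⟨y, hy, hξy⟩ := hξ
  -- ‖ξ‖ ≤ L
  have hnorm : ‖ξ‖ ≤ L := by
    by_contra h
    push_neg at h
    have h1 := hξy (y + ξ)
    have h2 := hLip (y + ξ) y
    simp only [add_sub_cancel_left] at h1 h2
    rw [real_inner_self_eq_norm_sq] at h1
    have := (abs_le.mp h2).2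
    nlinarith [norm_nonneg ξ]
  intro z
  have h1 := hξy z
  have h2 := (abs_le.mp (hLip y x)).1
  have hyx : ‖y - x‖ ≤ ε / (2 * L) := by
    rwa [Metric.mem_closedBall, dist_eq_norm] at hy
  have hcs : ⟪ξ, x - y⟫ ≥ -(L * ‖y - x‖) := by
    have := abs_real_inner_le_norm ξ (x - y)
    have hxy : ‖x - y‖ = ‖y - x‖ := norm_sub_rev x y
    have hb : |⟪ξ, x - y⟫| ≤ L * ‖y - x‖ := by
      calc |⟪ξ, x - y⟫| ≤ ‖ξ‖ * ‖x - y‖ := this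
        _ ≤ L * ‖y - x‖ := by rw [hxy]; exact mul_le_mul_of_nonneg_right hnorm (norm_nonneg _)
    linarith [(abs_le.mp hb).1]
  have hsplit : ⟪ξ, z - y⟫ = ⟪ξ, z - x⟫ + ⟪ξ, x - y⟫ := by
    rw [← inner_add_right]; congr 1; abel
  have hLnorm : L * ‖y - x‖ ≤ ε / 2 := by
    have := mul_le_mul_of_nonneg_left hyx hL.le
    calc L * ‖y - x‖ ≤ L * (ε / (2 * L)) := this
      _ = ε / 2 := by field_simp
  rw [ge_iff_le] at h1 ⊢
  rw [hsplit] at h1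
  linarith
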